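/- Let F : [0,T] → ℝ be integrable and γ : [0,T] → [0,∞) be measurable with ∫_0^T γ(s)² ds < ∞. Let Y : [0,T] → [0,∞) be continuous with Y(0) = 0, and suppose that on every open interval (α₁,α₂) ⊆ {t : Y(t) > 0} with Y(α₁) = 0, Y is absolutely continuous with Y'(t) ≤ F(t) Y(t) + γ(t) almost everywhere. Then for all t ∈ [0,T], Y(t) ≤ ∫_0^t γ(s) exp(∫_s^t F(u) du) ds. -/

import Mathlib

open MeasureTheory Set intervalIntegral


lemma abs_exp_sub_exp (x y : ℝ) : |Real.exp x - Real.exp y| ≤ |x - y| * Real.exp (max x y) := by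
  wlog h : y ≤ x generalizing x y
  · rw [abs_sub_comm, abs_sub_comm x y, max_comm]; exact this _ _ (le_of_not_ge h)
  rw [abs_of_nonneg (sub_nonneg.2 (Real.exp_le_exp.2 h)), abs_of_nonneg (sub_nonneg.2 h),
    max_eq_left h]
  have h1 := Real.add_one_le_exp (y - x)
  have h3 : Real.exp y = Real.exp x * Real.exp (y - x) := by
    rw [← Real.exp_add]; ring_nf
  nlinarith [Real.exp_pos x, Real.exp_pos (y - x)]

lemma exp_primitive_identity (a b : ℝ) (hab : a ≤ b) (G : ℝ → ℝ)
    (hG : IntegrableOn G (Icc a b)) :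
    ∫ u in a..b, G u * Real.exp (∫ v in a..u, G v)
      = Real.exp (∫ v in a..b, G v) - 1 := by
  have hIoc : Ioc a b ⊆ Icc a b := Ioc_subset_Icc_self
  have habs : IntegrableOn (fun x => |G x|) (Icc a b) := hG.abs
  set M := ∫ x in Icc a b, |G x| with hM
  have hM0 : 0 ≤ M := setIntegral_nonneg measurableSet_Icc fun x _ => abs_nonneg _
  set Q : ℝ → ℝ := fun s => ∫ v in a..s, G v with hQdef
  have hQM : ∀ s ∈ Icc a b, |Q s| ≤ M := by
    intro s hs
    have hsub : Ioc a s ⊆ Icc a b := fun x hx => ⟨hx.1.le, hx.2.trans hs.2⟩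
    rw [hQdef]
    simp only
    rw [integral_of_le hs.1]
    calc |∫ v in Ioc a s, G v| ≤ ∫ v in Ioc a s, |G v| := by
          simpa [Real.norm_eq_abs] using
            norm_integral_le_integral_norm (μ := volume.restrict (Ioc a s)) G
      _ ≤ M := setIntegral_mono_set habs
          (Filter.Eventually.of_forall fun x => abs_nonneg _) hsub.eventuallyLE
  set C := Real.exp M + (M + 1) * Real.exp (M + 1) + Real.exp (M + 1) with hC
  have hC0 : 0 < C := by positivity
  set X := (∫ u in a..b, G u * Real.exp (Q u)) - (Real.exp (Q b) - 1) with hX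
  suffices key : ∀ ε : ℝ, 0 < ε → ε ≤ 1 → |X| ≤ ε * C by
    have hall : ∀ ε : ℝ, 0 < ε → |X| ≤ ε * C := by
      intro ε hε
      calc |X| ≤ min ε 1 * C := key _ (lt_min hε one_pos) (min_le_right _ _)
        _ ≤ ε * C := mul_le_mul_of_nonneg_right (min_le_left _ _) hC0.le
    have h0 : |X| ≤ 0 := by
      by_contra h
      push_neg at h
      have h2 := hall (|X| / (2 * C)) (by positivity)
      rw [div_mul_eq_mul_div] at h2
      have h3 : |X| * C / (2 * C) = |X| / 2 := by
        field_simp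
      rw [h3] at h2
      linarith
    have hX0 : X = 0 := abs_eq_zero.1 (le_antisymm h0 (abs_nonneg _))
    have := sub_eq_zero.1 hX0
    linarith [this]
  intro ε hε hε1
  obtain ⟨g, hgapprox, hgi⟩ :=
    (hG.integrable_indicator measurableSet_Icc).exists_boundedContinuous_integral_sub_le hε
  have hGgi : IntegrableOn (fun x => |G x - g x|) (Icc a b) := (hG.sub hgi.integrableOn).abs
  have hGg : ∫ x in Icc a b, |G x - g x| ≤ ε := by
    have h1 : ∫ x in Icc a b, |G x - g x|
        = ∫ x in Icc a b, ‖(Icc a b).indicator G x - g x‖ :=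
      setIntegral_congr_fun measurableSet_Icc fun x hx => by
        rw [indicator_of_mem hx, Real.norm_eq_abs]
    rw [h1]
    exact le_trans (setIntegral_le_integral
      ((hG.integrable_indicator measurableSet_Icc).sub hgi).norm
      (Filter.Eventually.of_forall fun x => norm_nonneg _)) hgapprox
  set P : ℝ → ℝ := fun s => ∫ v in a..s, g v with hPdef
  have hPQ : ∀ s ∈ Icc a b, |Q s - P s| ≤ ε := by
    intro s hs
    have hsub : Ioc a s ⊆ Icc a b := fun x hx => ⟨hx.1.le, hx.2.trans hs.2⟩
    have h1 : Q s - P s = ∫ v in Ioc a s, (G v - g v) := by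
      rw [hQdef, hPdef]
      simp only
      rw [integral_of_le hs.1, integral_of_le hs.1,
        ← integral_sub (hG.mono_set hsub) hgi.integrableOn]
    rw [h1]
    calc |∫ v in Ioc a s, (G v - g v)| ≤ ∫ v in Ioc a s, |G v - g v| := by
          simpa [Real.norm_eq_abs] using
            norm_integral_le_integral_norm (μ := volume.restrict (Ioc a s)) (fun v => G v - g v)
      _ ≤ ∫ x in Icc a b, |G x - g x| := setIntegral_mono_set hGgi
          (Filter.Eventually.of_forall fun x => abs_nonneg _) hsub.eventuallyLE
      _ ≤ ε := hGg
  have hPM : ∀ s ∈ Icc a b, |P s| ≤ M + 1 := by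
    intro s hs
    have h1 : |P s| ≤ |Q s| + |Q s - P s| := by
      calc |P s| = |Q s - (Q s - P s)| := by ring_nf
        _ ≤ |Q s| + |Q s - P s| := abs_sub _ _
    linarith [hQM s hs, hPQ s hs]
  -- continuous identity
  have hP' : ∀ u : ℝ, HasDerivAt P (g u) u := fun u =>
    intervalIntegral.integral_hasDerivAt_right (g.continuous.intervalIntegrable a u)
      (g.continuous.stronglyMeasurableAtFilter volume (nhds u)) g.continuous.continuousAt
  have hPcont : Continuous P := continuous_iff_continuousAt.2 fun u => (hP' u).continuousAt
  have hexp' : ∀ u : ℝ, HasDerivAt (fun s => Real.exp (P s)) (g u * Real.exp (P u)) u := by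
    intro u
    have := (hP' u).exp
    simpa [mul_comm] using this
  have hcontInt : Continuous fun u => g u * Real.exp (P u) :=
    g.continuous.mul (Real.continuous_exp.comp hPcont)
  have hcontId : ∫ u in a..b, g u * Real.exp (P u) = Real.exp (P b) - Real.exp (P a) :=
    intervalIntegral.integral_eq_sub_of_hasDerivAt (fun u _ => hexp' u)
      (hcontInt.intervalIntegrable a b)
  have hPa : P a = 0 := by rw [hPdef]; simp
  rw [hPa, Real.exp_zero] at hcontId
  -- integrability
  have hQmeas : AEStronglyMeasurable Q (volume.restrict (Ioc a b)) := by
    have hQc : ContinuousOn Q (Icc a b) := by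
      have h2 : IntegrableOn G (uIcc a b) := by rwa [uIcc_of_le hab]
      have := intervalIntegral.continuousOn_primitive_interval (μ := volume) h2
      rwa [uIcc_of_le hab] at this
    exact (hQc.mono hIoc).aestronglyMeasurable measurableSet_Ioc
  have hGeQ : IntegrableOn (fun u => G u * Real.exp (Q u)) (Ioc a b) := by
    have h1 : Integrable (fun u => Real.exp (Q u) * G u) (volume.restrict (Ioc a b)) := by
      apply Integrable.bdd_mul (c := Real.exp M) (hG.mono_set hIoc)
        (Real.continuous_exp.comp_aestronglyMeasurable hQmeas)
      filter_upwards [ae_restrict_mem measurableSet_Ioc] with u hu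
      rw [Real.norm_eq_abs, abs_of_pos (Real.exp_pos _)]
      exact Real.exp_le_exp.2 ((le_abs_self _).trans (hQM u (hIoc hu)))
    have h2 : (fun u => Real.exp (Q u) * G u) = fun u => G u * Real.exp (Q u) :=
      funext fun u => mul_comm _ _
    rwa [h2] at h1
  have hgeP : IntegrableOn (fun u => g u * Real.exp (P u)) (Ioc a b) :=
    hcontInt.integrableOn_Ioc
  have hgabs : ∫ x in Ioc a b, |g x| ≤ M + 1 := by
    have h1 : ∀ x ∈ Ioc a b, |g x| ≤ |G x| + |G x - g x| := by
      intro x _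
      calc |g x| = |G x + (g x - G x)| := by ring_nf
        _ ≤ |G x| + |g x - G x| := abs_add_le _ _
        _ = |G x| + |G x - g x| := by rw [abs_sub_comm]
    calc ∫ x in Ioc a b, |g x|
        ≤ ∫ x in Ioc a b, (|G x| + |G x - g x|) :=
          setIntegral_mono_on hgi.integrableOn.abs
            ((hG.mono_set hIoc).abs.add (hGgi.mono_set hIoc)) measurableSet_Ioc h1
      _ = (∫ x in Ioc a b, |G x|) + ∫ x in Ioc a b, |G x - g x| :=
          integral_add ((hG.mono_set hIoc).abs) (hGgi.mono_set hIoc)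
      _ ≤ M + ε := add_le_add
          (setIntegral_mono_set habs (Filter.Eventually.of_forall fun x => abs_nonneg _)
            hIoc.eventuallyLE)
          (le_trans (setIntegral_mono_set hGgi (Filter.Eventually.of_forall fun x => abs_nonneg _)
            hIoc.eventuallyLE) hGg)
      _ ≤ M + 1 := by linarith
  have hptwise : ∀ u ∈ Ioc a b, |G u * Real.exp (Q u) - g u * Real.exp (P u)|
      ≤ |G u - g u| * Real.exp M + |g u| * (ε * Real.exp (M + 1)) := by
    intro u hu
    have huI := hIoc hu
    have e1 : |Real.exp (Q u)| ≤ Real.exp M := by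
      rw [abs_of_pos (Real.exp_pos _)]
      exact Real.exp_le_exp.2 ((le_abs_self _).trans (hQM u huI))
    have e2 : |Real.exp (Q u) - Real.exp (P u)| ≤ ε * Real.exp (M + 1) := by
      have hmax : max (Q u) (P u) ≤ M + 1 :=
        max_le ((le_abs_self _).trans ((hQM u huI).trans (by linarith)))
          ((le_abs_self _).trans (hPM u huI))
      calc |Real.exp (Q u) - Real.exp (P u)|
          ≤ |Q u - P u| * Real.exp (max (Q u) (P u)) := abs_exp_sub_exp _ _
        _ ≤ ε * Real.exp (M + 1) :=
          mul_le_mul (hPQ u huI) (Real.exp_le_exp.2 hmax) (Real.exp_pos _).le hε.le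
    calc |G u * Real.exp (Q u) - g u * Real.exp (P u)|
        = |(G u - g u) * Real.exp (Q u) + g u * (Real.exp (Q u) - Real.exp (P u))| := by
          ring_nf
      _ ≤ |(G u - g u) * Real.exp (Q u)| + |g u * (Real.exp (Q u) - Real.exp (P u))| :=
          abs_add_le _ _
      _ = |G u - g u| * |Real.exp (Q u)| + |g u| * |Real.exp (Q u) - Real.exp (P u)| := by
          rw [abs_mul, abs_mul]
      _ ≤ |G u - g u| * Real.exp M + |g u| * (ε * Real.exp (M + 1)) :=
          add_le_add (mul_le_mul_of_nonneg_left e1 (abs_nonneg _))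
            (mul_le_mul_of_nonneg_left e2 (abs_nonneg _))
  have hdiff1 : |(∫ u in a..b, G u * Real.exp (Q u)) - ∫ u in a..b, g u * Real.exp (P u)|
      ≤ ε * Real.exp M + (M + 1) * (ε * Real.exp (M + 1)) := by
    rw [integral_of_le hab, integral_of_le hab, ← integral_sub hGeQ hgeP]
    calc |∫ u in Ioc a b, (G u * Real.exp (Q u) - g u * Real.exp (P u))|
        ≤ ∫ u in Ioc a b, |G u * Real.exp (Q u) - g u * Real.exp (P u)| := by
          simpa [Real.norm_eq_abs] using
            norm_integral_le_integral_norm (μ := volume.restrict (Ioc a b))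
              (fun u => G u * Real.exp (Q u) - g u * Real.exp (P u))
      _ ≤ ∫ u in Ioc a b, (|G u - g u| * Real.exp M + |g u| * (ε * Real.exp (M + 1))) :=
          setIntegral_mono_on (hGeQ.sub hgeP).abs
            (((hGgi.mono_set hIoc).mul_const _).add (hgi.integrableOn.abs.mul_const _))
            measurableSet_Ioc hptwise
      _ = (∫ u in Ioc a b, |G u - g u|) * Real.exp M
            + (∫ u in Ioc a b, |g u|) * (ε * Real.exp (M + 1)) := by
          rw [integral_add ((hGgi.mono_set hIoc).mul_const _)
            (hgi.integrableOn.abs.mul_const _), MeasureTheory.integral_mul_const, MeasureTheory.integral_mul_const]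
      _ ≤ ε * Real.exp M + (M + 1) * (ε * Real.exp (M + 1)) := by
          apply add_le_add
          · exact mul_le_mul_of_nonneg_right
              (le_trans (setIntegral_mono_set hGgi
                (Filter.Eventually.of_forall fun x => abs_nonneg _) hIoc.eventuallyLE) hGg)
              (Real.exp_pos _).le
          · exact mul_le_mul_of_nonneg_right hgabs (by positivity)
  have hdiff2 : |Real.exp (Q b) - Real.exp (P b)| ≤ ε * Real.exp (M + 1) := by
    have hbI : b ∈ Icc a b := ⟨hab, le_rfl⟩
    have hmax : max (Q b) (P b) ≤ M + 1 :=
      max_le ((le_abs_self _).trans ((hQM b hbI).trans (by linarith)))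
        ((le_abs_self _).trans (hPM b hbI))
    calc |Real.exp (Q b) - Real.exp (P b)|
        ≤ |Q b - P b| * Real.exp (max (Q b) (P b)) := abs_exp_sub_exp _ _
      _ ≤ ε * Real.exp (M + 1) :=
        mul_le_mul (hPQ b hbI) (Real.exp_le_exp.2 hmax) (Real.exp_pos _).le hε.le
  have hXeq : X = ((∫ u in a..b, G u * Real.exp (Q u)) - ∫ u in a..b, g u * Real.exp (P u))
      - (Real.exp (Q b) - Real.exp (P b)) := by
    rw [hX, hcontId]
    ring
  rw [hXeq]
  calc |((∫ u in a..b, G u * Real.exp (Q u)) - ∫ u in a..b, g u * Real.exp (P u))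
      - (Real.exp (Q b) - Real.exp (P b))|
      ≤ |(∫ u in a..b, G u * Real.exp (Q u)) - ∫ u in a..b, g u * Real.exp (P u)|
        + |Real.exp (Q b) - Real.exp (P b)| := abs_sub _ _
    _ ≤ (ε * Real.exp M + (M + 1) * (ε * Real.exp (M + 1))) + ε * Real.exp (M + 1) :=
        add_le_add hdiff1 hdiff2
    _ = ε * C := by rw [hC]; ring


lemma ibp_primitive (a b : ℝ) (hab : a ≤ b) (p q : ℝ → ℝ) (c : ℝ)
    (hp : IntegrableOn p (Icc a b)) (hq : IntegrableOn q (Icc a b)) :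
    (∫ x in Ioc a b, p x) * (c + ∫ x in Ioc a b, q x)
      = ∫ u in Ioc a b, (p u * (c + ∫ x in Ioc a u, q x) + (∫ x in Ioc a u, p x) * q u) := by
  have hIoc : Ioc a b ⊆ Icc a b := Ioc_subset_Icc_self
  have hpI : IntegrableOn p (Ioc a b) := hp.mono_set hIoc
  have hqI : IntegrableOn q (Ioc a b) := hq.mono_set hIoc
  have hsubq : ∀ u ∈ Icc a b, Ioc a u ⊆ Icc a b := fun u hu x hx => ⟨hx.1.le, hx.2.trans hu.2⟩
  have hPq_cont : ContinuousOn (fun u => ∫ x in Ioc a u, q x) (Icc a b) :=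
    continuousOn_primitive hq
  have hPp_cont : ContinuousOn (fun u => ∫ x in Ioc a u, p x) (Icc a b) :=
    continuousOn_primitive hp
  have hbd : ∀ (f : ℝ → ℝ), IntegrableOn f (Icc a b) → ∀ u ∈ Icc a b,
      |∫ x in Ioc a u, f x| ≤ ∫ x in Icc a b, |f x| := by
    intro f hf u hu
    calc |∫ x in Ioc a u, f x| ≤ ∫ x in Ioc a u, |f x| := by
          simpa [Real.norm_eq_abs] using
            norm_integral_le_integral_norm (μ := volume.restrict (Ioc a u)) f
      _ ≤ _ := setIntegral_mono_set hf.abs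
          (Filter.Eventually.of_forall fun x => abs_nonneg _) (hsubq u hu).eventuallyLE
  have hmeasPq : AEStronglyMeasurable (fun u => ∫ x in Ioc a u, q x)
      (volume.restrict (Ioc a b)) :=
    (hPq_cont.mono hIoc).aestronglyMeasurable measurableSet_Ioc
  have hmeasPp : AEStronglyMeasurable (fun u => ∫ x in Ioc a u, p x)
      (volume.restrict (Ioc a b)) :=
    (hPp_cont.mono hIoc).aestronglyMeasurable measurableSet_Ioc
  have hadj : ∀ u ∈ Icc a b, (∫ x in Ioc a u, q x) + ∫ x in Ioc u b, q x
      = ∫ x in Ioc a b, q x := by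
    intro u hu
    have h1 : IntervalIntegrable q volume a u :=
      (intervalIntegrable_iff_integrableOn_Ioc_of_le hu.1).2 (hq.mono_set (hsubq u hu))
    have h2 : IntervalIntegrable q volume u b :=
      (intervalIntegrable_iff_integrableOn_Ioc_of_le hu.2).2
        (hq.mono_set (fun x hx => ⟨(hu.1.trans hx.1.le), hx.2⟩))
    rw [← integral_of_le hu.1, ← integral_of_le hu.2, ← integral_of_le hab]
    exact integral_add_adjacent_intervals h1 h2
  have I1 : IntegrableOn (fun u => p u * (c + ∫ x in Ioc a u, q x)) (Ioc a b) := by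
    have h1 : Integrable (fun u => (c + ∫ x in Ioc a u, q x) * p u)
        (volume.restrict (Ioc a b)) := by
      apply Integrable.bdd_mul (c := |c| + ∫ x in Icc a b, |q x|) hpI
        (aestronglyMeasurable_const.add hmeasPq)
      filter_upwards [ae_restrict_mem measurableSet_Ioc] with u hu
      rw [Real.norm_eq_abs]
      calc |c + ∫ x in Ioc a u, q x| ≤ |c| + |∫ x in Ioc a u, q x| := abs_add_le _ _
        _ ≤ |c| + ∫ x in Icc a b, |q x| := by linarith [hbd q hq u (hIoc hu)]
    have h2 : (fun u => (c + ∫ x in Ioc a u, q x) * p u)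
        = fun u => p u * (c + ∫ x in Ioc a u, q x) := funext fun u => mul_comm _ _
    rwa [h2] at h1
  have hcongr2 : (fun u => ∫ x in Ioc u b, q x)
      =ᵐ[volume.restrict (Ioc a b)] (fun u => (∫ x in Ioc a b, q x) - ∫ x in Ioc a u, q x) := by
    filter_upwards [ae_restrict_mem measurableSet_Ioc] with u hu
    rw [← hadj u (hIoc hu)]; ring
  have I2 : IntegrableOn (fun u => p u * (∫ x in Ioc u b, q x)) (Ioc a b) := by
    have hm : AEStronglyMeasurable (fun u => ∫ x in Ioc u b, q x)
        (volume.restrict (Ioc a b)) :=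
      (aestronglyMeasurable_const.sub hmeasPq).congr hcongr2.symm
    have h1 : Integrable (fun u => (∫ x in Ioc u b, q x) * p u)
        (volume.restrict (Ioc a b)) := by
      apply Integrable.bdd_mul (c := |∫ x in Ioc a b, q x| + ∫ x in Icc a b, |q x|) hpI hm
      filter_upwards [hcongr2, ae_restrict_mem measurableSet_Ioc] with u hu hu2
      rw [Real.norm_eq_abs, hu]
      calc |(∫ x in Ioc a b, q x) - ∫ x in Ioc a u, q x|
          ≤ |∫ x in Ioc a b, q x| + |∫ x in Ioc a u, q x| := abs_sub _ _
        _ ≤ _ := by linarith [hbd q hq u (hIoc hu2)]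
    have h2 : (fun u => (∫ x in Ioc u b, q x) * p u)
        = fun u => p u * (∫ x in Ioc u b, q x) := funext fun u => mul_comm _ _
    rwa [h2] at h1
  have I3 : IntegrableOn (fun v => (∫ x in Ioc a v, p x) * q v) (Ioc a b) := by
    apply Integrable.bdd_mul (c := ∫ x in Icc a b, |p x|) hqI hmeasPp
    filter_upwards [ae_restrict_mem measurableSet_Ioc] with u hu
    rw [Real.norm_eq_abs]
    exact hbd p hp u (hIoc hu)
  -- Fubini core
  have hsm : MeasurableSet {z : ℝ × ℝ | z.1 < z.2} :=
    measurableSet_lt measurable_fst measurable_snd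
  have hprod : Integrable ({z : ℝ × ℝ | z.1 < z.2}.indicator (fun z => p z.1 * q z.2))
      ((volume.restrict (Ioc a b)).prod (volume.restrict (Ioc a b))) :=
    (hpI.mul_prod hqI).indicator hsm
  have hswap : (∫ u in Ioc a b, ∫ v in Ioc a b,
        {z : ℝ × ℝ | z.1 < z.2}.indicator (fun z => p z.1 * q z.2) (u, v))
      = ∫ v in Ioc a b, ∫ u in Ioc a b,
        {z : ℝ × ℝ | z.1 < z.2}.indicator (fun z => p z.1 * q z.2) (u, v) :=
    integral_integral_swap hprod
  have hl : ∀ u ∈ Ioc a b, p u * (∫ x in Ioc u b, q x)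
      = ∫ v in Ioc a b, {z : ℝ × ℝ | z.1 < z.2}.indicator (fun z => p z.1 * q z.2) (u, v) := by
    intro u hu
    have h1 : (fun v => {z : ℝ × ℝ | z.1 < z.2}.indicator (fun z => p z.1 * q z.2) (u, v))
        = (Ioi u).indicator (fun v => p u * q v) := by
      funext v
      by_cases h : u < v
      · simp [indicator, h, mem_setOf_eq, mem_Ioi]
      · simp [indicator, h, mem_setOf_eq, mem_Ioi]
    rw [h1, setIntegral_indicator measurableSet_Ioi]
    have h2 : Ioc a b ∩ Ioi u = Ioc u b := by
      ext v
      simp only [mem_inter_iff, mem_Ioc, mem_Ioi]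
      constructor
      · rintro ⟨⟨_, h2⟩, h3⟩; exact ⟨h3, h2⟩
      · rintro ⟨h1', h2⟩; exact ⟨⟨hu.1.trans h1', h2⟩, h1'⟩
    rw [h2, MeasureTheory.integral_const_mul]
  have hr : ∀ v ∈ Ioc a b, (∫ x in Ioc a v, p x) * q v
      = ∫ u in Ioc a b, {z : ℝ × ℝ | z.1 < z.2}.indicator (fun z => p z.1 * q z.2) (u, v) := by
    intro v hv
    have h1 : (fun u => {z : ℝ × ℝ | z.1 < z.2}.indicator (fun z => p z.1 * q z.2) (u, v))
        = (Iio v).indicator (fun u => p u * q v) := by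
      funext u
      by_cases h : u < v
      · simp [indicator, h, mem_setOf_eq, mem_Iio]
      · simp [indicator, h, mem_setOf_eq, mem_Iio]
    rw [h1, setIntegral_indicator measurableSet_Iio]
    have h2 : Ioc a b ∩ Iio v = Ioo a v := by
      ext u
      simp only [mem_inter_iff, mem_Ioc, mem_Iio, mem_Ioo]
      constructor
      · rintro ⟨⟨h1', _⟩, h3⟩; exact ⟨h1', h3⟩
      · rintro ⟨h1', h2'⟩; exact ⟨⟨h1', h2'.le.trans hv.2⟩, h2'⟩
    rw [h2, MeasureTheory.integral_mul_const, integral_Ioc_eq_integral_Ioo]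
  have S2eq : ∫ u in Ioc a b, p u * (∫ x in Ioc u b, q x)
      = ∫ v in Ioc a b, (∫ x in Ioc a v, p x) * q v := by
    calc ∫ u in Ioc a b, p u * (∫ x in Ioc u b, q x)
        = ∫ u in Ioc a b, ∫ v in Ioc a b,
            {z : ℝ × ℝ | z.1 < z.2}.indicator (fun z => p z.1 * q z.2) (u, v) :=
          setIntegral_congr_fun measurableSet_Ioc hl
      _ = ∫ v in Ioc a b, ∫ u in Ioc a b,
            {z : ℝ × ℝ | z.1 < z.2}.indicator (fun z => p z.1 * q z.2) (u, v) := hswap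
      _ = ∫ v in Ioc a b, (∫ x in Ioc a v, p x) * q v :=
          (setIntegral_congr_fun measurableSet_Ioc hr).symm
  calc (∫ x in Ioc a b, p x) * (c + ∫ x in Ioc a b, q x)
      = ∫ u in Ioc a b, p u * (c + ∫ x in Ioc a b, q x) :=
        (MeasureTheory.integral_mul_const _ _).symm
    _ = ∫ u in Ioc a b, (p u * (c + ∫ x in Ioc a u, q x) + p u * (∫ x in Ioc u b, q x)) :=
        setIntegral_congr_fun measurableSet_Ioc (fun u hu => by
          rw [← hadj u (hIoc hu)]; ring)
    _ = (∫ u in Ioc a b, p u * (c + ∫ x in Ioc a u, q x))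
          + ∫ u in Ioc a b, p u * (∫ x in Ioc u b, q x) := integral_add I1 I2
    _ = (∫ u in Ioc a b, p u * (c + ∫ x in Ioc a u, q x))
          + ∫ v in Ioc a b, (∫ x in Ioc a v, p x) * q v := by rw [S2eq]
    _ = ∫ u in Ioc a b, (p u * (c + ∫ x in Ioc a u, q x) + (∫ x in Ioc a u, p x) * q u) :=
        (integral_add I1 I3).symm

/-- Gronwall-type comparison: if `Y ≥ 0` is continuous with `Y 0 = 0`, and on every
open interval on which `Y > 0` (with `Y` vanishing at the left endpoint) `Y` is
absolutely continuous with `Y' ≤ F·Y + γ` a.e., then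
`Y t ≤ ∫_0^t γ s · exp(∫_s^t F) ds`. -/
theorem gronwall_reflected (T : ℝ) (hT : 0 < T)
    (F : ℝ → ℝ) (hF : IntegrableOn F (Icc 0 T))
    (γ : ℝ → ℝ) (hγmeas : Measurable γ) (hγpos : ∀ t, 0 ≤ γ t)
    (hγsq : IntegrableOn (fun s => (γ s) ^ 2) (Icc 0 T))
    (Y : ℝ → ℝ) (hYcont : ContinuousOn Y (Icc 0 T)) (hYpos : ∀ t ∈ Icc 0 T, 0 ≤ Y t)
    (hY0 : Y 0 = 0)
    (hAC : ∀ α₁ α₂ : ℝ, 0 ≤ α₁ → α₂ ≤ T → α₁ < α₂ →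
      (∀ t ∈ Ioo α₁ α₂, 0 < Y t) → Y α₁ = 0 →
      ∃ Y' : ℝ → ℝ,
        (∀ s ∈ Icc α₁ α₂, ∀ t ∈ Icc α₁ α₂, s ≤ t → Y t - Y s = ∫ u in s..t, Y' u) ∧
        (∀ᵐ u ∂(volume.restrict (Ioo α₁ α₂)), Y' u ≤ F u * Y u + γ u)) :
    ∀ t ∈ Icc 0 T, Y t ≤ ∫ s in (0:ℝ)..t, γ s * Real.exp (∫ u in s..t, F u) := by
  intro t ht
  rcases le_or_gt (Y t) 0 with hYt | hYt
  · exact le_trans hYt (intervalIntegral.integral_nonneg ht.1 fun s _ =>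
      mul_nonneg (hγpos s) (Real.exp_pos _).le)
  -- locate the last zero of Y before t
  have hsub0 : Icc 0 t ⊆ Icc 0 T := Icc_subset_Icc le_rfl ht.2
  set S : Set ℝ := Icc 0 t ∩ Y ⁻¹' {0} with hSdef
  have hS0 : (0:ℝ) ∈ S := ⟨⟨le_rfl, ht.1⟩, by simp [hY0]⟩
  have hSbdd : BddAbove S := ⟨t, fun s hs => hs.1.2⟩
  have hScl : IsClosed S :=
    (hYcont.mono hsub0).preimage_isClosed_of_isClosed isClosed_Icc isClosed_singleton
  set α := sSup S with hαdef
  have hαS : α ∈ S := hScl.csSup_mem ⟨0, hS0⟩ hSbdd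
  have hα0 : 0 ≤ α := hαS.1.1
  have hαt : α ≤ t := hαS.1.2
  have hYα : Y α = 0 := hαS.2
  have hαlt : α < t := by
    rcases hαt.lt_or_eq with h | h
    · exact h
    · exfalso; rw [h] at hYα; rw [hYα] at hYt; exact lt_irrefl _ hYt
  have hpos' : ∀ s ∈ Ioo α t, 0 < Y s := by
    intro s hs
    have hsIcc0 : s ∈ Icc 0 t := ⟨hα0.trans hs.1.le, hs.2.le⟩
    rcases (hYpos s (hsub0 hsIcc0)).lt_or_eq with h | h
    · exact h
    · exact absurd (le_csSup hSbdd ⟨hsIcc0, by simp [← h]⟩) (not_le.2 hs.1)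
  obtain ⟨Y', hint, hae⟩ := hAC α t hα0 ht.2 hαlt hpos' hYα
  have hαmem : α ∈ Icc α t := ⟨le_rfl, hαt⟩
  have htmem : t ∈ Icc α t := ⟨hαt, le_rfl⟩
  have hYt' : Y t - Y α = ∫ u in α..t, Y' u := hint α hαmem t htmem hαt
  have hY'ii : IntervalIntegrable Y' volume α t := by
    by_contra h
    rw [intervalIntegral.integral_undef h, hYα, sub_zero] at hYt'
    exact absurd hYt' (ne_of_gt hYt)
  have hY'Icc : IntegrableOn Y' (Icc α t) :=
    (integrableOn_Icc_iff_integrableOn_Ioc).2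
      ((intervalIntegrable_iff_integrableOn_Ioc_of_le hαlt.le).1 hY'ii)
  have hYs : ∀ s ∈ Icc α t, Y s = ∫ x in Ioc α s, Y' x := by
    intro s hs
    have h1 := hint α hαmem s hs hs.1
    rw [hYα, sub_zero] at h1
    rw [h1, integral_of_le hs.1]
  -- the integrating factor E
  have hsubT : Icc α t ⊆ Icc 0 T := Icc_subset_Icc hα0 ht.2
  have hIocsub : Ioc α t ⊆ Icc α t := Ioc_subset_Icc_self
  have hFab : IntegrableOn F (Icc α t) := hF.mono_set hsubT
  set E : ℝ → ℝ := fun s => Real.exp (∫ v in α..s, -F v) with hEdef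
  have hEpos : ∀ s, 0 < E s := fun s => Real.exp_pos _
  have hEs : ∀ s ∈ Icc α t, E s = 1 + ∫ x in Ioc α s, (-F x) * E x := by
    intro s hs
    have h1 := exp_primitive_identity α s hs.1 (fun v => -F v)
      ((hFab.mono_set (Icc_subset_Icc le_rfl hs.2)).neg)
    rw [integral_of_le hs.1] at h1
    have h1' : ∫ x in Ioc α s, (-F x) * E x = E s - 1 := h1
    linarith
  have hQcont : ContinuousOn (fun s => ∫ v in α..s, -F v) (Icc α t) := by
    have h2 : IntegrableOn (fun v => -F v) (uIcc α t) := by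
      rw [uIcc_of_le hαlt.le]; exact hFab.neg
    have := intervalIntegral.continuousOn_primitive_interval (μ := volume) h2
    rwa [uIcc_of_le hαlt.le] at this
  have hEcont : ContinuousOn E (Icc α t) := Real.continuous_exp.comp_continuousOn hQcont
  set MF := ∫ x in Icc α t, |F x| with hMF
  have hQbd : ∀ s ∈ Icc α t, |∫ v in α..s, -F v| ≤ MF := by
    intro s hs
    have hss : Ioc α s ⊆ Icc α t := fun x hx => ⟨hx.1.le, hx.2.trans hs.2⟩
    rw [integral_of_le hs.1]
    calc |∫ v in Ioc α s, -F v| ≤ ∫ v in Ioc α s, |(-F v)| := by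
          simpa [Real.norm_eq_abs] using
            norm_integral_le_integral_norm (μ := volume.restrict (Ioc α s)) (fun v => -F v)
      _ = ∫ v in Ioc α s, |F v| := by simp [abs_neg]
      _ ≤ MF := setIntegral_mono_set hFab.abs
          (Filter.Eventually.of_forall fun x => abs_nonneg _) hss.eventuallyLE
  have hEbd : ∀ s ∈ Icc α t, E s ≤ Real.exp MF := fun s hs =>
    Real.exp_le_exp.2 ((le_abs_self _).trans (hQbd s hs))
  have hEmeas : AEStronglyMeasurable E (volume.restrict (Icc α t)) :=
    hEcont.aestronglyMeasurable measurableSet_Icc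
  have hEmeasIoc : AEStronglyMeasurable E (volume.restrict (Ioc α t)) :=
    (hEcont.mono hIocsub).aestronglyMeasurable measurableSet_Ioc
  have hqint : IntegrableOn (fun u => (-F u) * E u) (Icc α t) := by
    have h1 : Integrable (fun u => E u * (-F u)) (volume.restrict (Icc α t)) := by
      apply Integrable.bdd_mul (c := Real.exp MF) hFab.neg hEmeas
      filter_upwards [ae_restrict_mem measurableSet_Icc] with u hu
      rw [Real.norm_eq_abs, abs_of_pos (hEpos u)]
      exact hEbd u hu
    have h2 : (fun u => E u * (-F u)) = fun u => (-F u) * E u := funext fun u => mul_comm _ _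
    rwa [h2] at h1
  -- integration by parts
  have hibp2 : Y t * E t = ∫ u in Ioc α t, (Y' u - F u * Y u) * E u := by
    have h0 := ibp_primitive α t hαlt.le Y' (fun u => (-F u) * E u) 1 hY'Icc hqint
    rw [show ∫ x in Ioc α t, Y' x = Y t from (hYs t htmem).symm] at h0
    rw [show (1:ℝ) + ∫ x in Ioc α t, (-F x) * E x = E t from (hEs t htmem).symm] at h0
    rw [h0]
    apply setIntegral_congr_fun measurableSet_Ioc
    intro u hu
    have huI : u ∈ Icc α t := hIocsub hu
    show Y' u * (1 + ∫ x in Ioc α u, (-F x) * E x) + (∫ x in Ioc α u, Y' x) * ((-F u) * E u)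
        = (Y' u - F u * Y u) * E u
    rw [← hYs u huI, ← hEs u huI]
    ring
  -- estimates and integrabilities for the comparison
  obtain ⟨CY, hCY⟩ := isCompact_Icc.exists_bound_of_continuousOn hYcont
  have hYmeas : AEStronglyMeasurable Y (volume.restrict (Ioc α t)) :=
    ((hYcont.mono hsubT).mono hIocsub).aestronglyMeasurable measurableSet_Ioc
  have hFY : IntegrableOn (fun u => F u * Y u) (Ioc α t) := by
    have h1 : Integrable (fun u => Y u * F u) (volume.restrict (Ioc α t)) := by
      apply Integrable.bdd_mul (c := CY) (hFab.mono_set hIocsub) hYmeas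
      filter_upwards [ae_restrict_mem measurableSet_Ioc] with u hu
      exact hCY u (hsubT (hIocsub hu))
    have h2 : (fun u => Y u * F u) = fun u => F u * Y u := funext fun u => mul_comm _ _
    rwa [h2] at h1
  have hEirr : IntegrableOn (fun u => (Y' u - F u * Y u) * E u) (Ioc α t) := by
    have hdiff : IntegrableOn (fun u => Y' u - F u * Y u) (Ioc α t) :=
      (hY'Icc.mono_set hIocsub).sub hFY
    have h1 : Integrable (fun u => E u * (Y' u - F u * Y u)) (volume.restrict (Ioc α t)) := by
      apply Integrable.bdd_mul (c := Real.exp MF) hdiff hEmeasIoc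
      filter_upwards [ae_restrict_mem measurableSet_Ioc] with u hu
      rw [Real.norm_eq_abs, abs_of_pos (hEpos u)]
      exact hEbd u (hIocsub hu)
    have h2 : (fun u => E u * (Y' u - F u * Y u)) = fun u => (Y' u - F u * Y u) * E u :=
      funext fun u => mul_comm _ _
    rwa [h2] at h1
  have hγT : IntegrableOn γ (Icc 0 T) := by
    have hconst : IntegrableOn (fun _ : ℝ => (1:ℝ)) (Icc 0 T) :=
      integrableOn_const measure_Icc_lt_top.ne
    have hmaj : IntegrableOn (fun s => 1 + γ s ^ 2) (Icc 0 T) := hconst.add hγsq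
    apply Integrable.mono hmaj hγmeas.aestronglyMeasurable.restrict
    filter_upwards with s
    rw [Real.norm_eq_abs, Real.norm_eq_abs, abs_of_nonneg (hγpos s),
      abs_of_nonneg (by positivity : (0:ℝ) ≤ 1 + γ s ^ 2)]
    nlinarith [sq_nonneg (γ s - 1), hγpos s]
  have hγE : IntegrableOn (fun u => γ u * E u) (Ioc α t) := by
    have h1 : Integrable (fun u => E u * γ u) (volume.restrict (Ioc α t)) := by
      apply Integrable.bdd_mul (c := Real.exp MF)
        (hγT.mono_set (fun x hx => hsubT (hIocsub hx))) hEmeasIoc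
      filter_upwards [ae_restrict_mem measurableSet_Ioc] with u hu
      rw [Real.norm_eq_abs, abs_of_pos (hEpos u)]
      exact hEbd u (hIocsub hu)
    have h2 : (fun u => E u * γ u) = fun u => γ u * E u := funext fun u => mul_comm _ _
    rwa [h2] at h1
  have hmono : ∫ u in Ioc α t, (Y' u - F u * Y u) * E u ≤ ∫ u in Ioc α t, γ u * E u := by
    apply setIntegral_mono_ae_restrict hEirr hγE
    have hres : volume.restrict (Ioo α t) = volume.restrict (Ioc α t) :=
      Measure.restrict_congr_set Ioo_ae_eq_Ioc
    rw [← hres]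
    filter_upwards [hae] with u hu
    exact mul_le_mul_of_nonneg_right (by linarith) (hEpos u).le
  have hkey : Y t * E t ≤ ∫ u in Ioc α t, γ u * E u := hibp2.le.trans hmono
  -- multiply by exp (∫ α..t F)
  have hEtK : E t * Real.exp (∫ v in α..t, F v) = 1 := by
    have h1 : E t = Real.exp (-(∫ v in α..t, F v)) := by
      rw [hEdef]; simp only; rw [intervalIntegral.integral_neg]
    rw [h1, ← Real.exp_add, neg_add_cancel, Real.exp_zero]
  have hYtle : Y t ≤ (∫ u in Ioc α t, γ u * E u) * Real.exp (∫ v in α..t, F v) := by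
    have h4 : Y t = (Y t * E t) * Real.exp (∫ v in α..t, F v) := by
      rw [mul_assoc, hEtK, mul_one]
    rw [h4]
    exact mul_le_mul_of_nonneg_right hkey (Real.exp_pos _).le
  have h5 : (∫ u in Ioc α t, γ u * E u) * Real.exp (∫ v in α..t, F v)
      = ∫ u in Ioc α t, γ u * Real.exp (∫ v in u..t, F v) := by
    rw [← MeasureTheory.integral_mul_const]
    apply setIntegral_congr_fun measurableSet_Ioc
    intro u hu
    have huI : u ∈ Icc α t := hIocsub hu
    have hFiu : IntervalIntegrable F volume α u :=
      (intervalIntegrable_iff_integrableOn_Ioc_of_le huI.1).2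
        (hFab.mono_set (fun x hx => ⟨hx.1.le, hx.2.trans huI.2⟩))
    have hFut : IntervalIntegrable F volume u t :=
      (intervalIntegrable_iff_integrableOn_Ioc_of_le huI.2).2
        (hFab.mono_set (fun x hx => ⟨huI.1.trans hx.1.le, hx.2⟩))
    have hadd : (∫ v in α..u, F v) + ∫ v in u..t, F v = ∫ v in α..t, F v :=
      integral_add_adjacent_intervals hFiu hFut
    show γ u * Real.exp (∫ v in α..u, -F v) * Real.exp (∫ v in α..t, F v)
        = γ u * Real.exp (∫ v in u..t, F v)
    rw [intervalIntegral.integral_neg, mul_assoc, ← Real.exp_add]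
    have h6 : -(∫ v in α..u, F v) + ∫ v in α..t, F v = ∫ v in u..t, F v := by linarith
    rw [h6]
  -- final comparison with the integral from 0
  have hρcont : ContinuousOn (fun s => ∫ v in s..t, F v) (Icc 0 t) := by
    have h2 : IntegrableOn F (uIcc 0 t) := by rw [uIcc_of_le ht.1]; exact hF.mono_set hsub0
    have := intervalIntegral.continuousOn_primitive_interval_left (μ := volume) h2
    rwa [uIcc_of_le ht.1] at this
  have hρbdd : ∀ s ∈ Icc 0 t, |∫ v in s..t, F v| ≤ ∫ x in Icc 0 t, |F x| := by
    intro s hs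
    have hss : Ioc s t ⊆ Icc 0 t := fun x hx => ⟨hs.1.trans hx.1.le, hx.2⟩
    rw [integral_of_le hs.2]
    calc |∫ v in Ioc s t, F v| ≤ ∫ v in Ioc s t, |F v| := by
          simpa [Real.norm_eq_abs] using
            norm_integral_le_integral_norm (μ := volume.restrict (Ioc s t)) F
      _ ≤ _ := setIntegral_mono_set (hF.mono_set hsub0).abs
          (Filter.Eventually.of_forall fun x => abs_nonneg _) hss.eventuallyLE
  have hρint : IntegrableOn (fun s => γ s * Real.exp (∫ v in s..t, F v)) (Icc 0 t) := by
    have hm : AEStronglyMeasurable (fun s => Real.exp (∫ v in s..t, F v))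
        (volume.restrict (Icc 0 t)) :=
      (Real.continuous_exp.comp_continuousOn hρcont).aestronglyMeasurable measurableSet_Icc
    have h1 : Integrable (fun s => Real.exp (∫ v in s..t, F v) * γ s)
        (volume.restrict (Icc 0 t)) := by
      apply Integrable.bdd_mul (c := Real.exp (∫ x in Icc 0 t, |F x|)) (hγT.mono_set hsub0) hm
      filter_upwards [ae_restrict_mem measurableSet_Icc] with s hs
      rw [Real.norm_eq_abs, abs_of_pos (Real.exp_pos _)]
      exact Real.exp_le_exp.2 ((le_abs_self _).trans (hρbdd s hs))
    have h2 : (fun s => Real.exp (∫ v in s..t, F v) * γ s)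
        = fun s => γ s * Real.exp (∫ v in s..t, F v) := funext fun s => mul_comm _ _
    rwa [h2] at h1
  have i1 : IntervalIntegrable (fun s => γ s * Real.exp (∫ v in s..t, F v)) volume 0 α :=
    (intervalIntegrable_iff_integrableOn_Ioc_of_le hα0).2
      (hρint.mono_set (fun x hx => ⟨hx.1.le, hx.2.trans hαt⟩))
  have i2 : IntervalIntegrable (fun s => γ s * Real.exp (∫ v in s..t, F v)) volume α t :=
    (intervalIntegrable_iff_integrableOn_Ioc_of_le hαlt.le).2
      (hρint.mono_set (fun x hx => ⟨hα0.trans hx.1.le, hx.2⟩))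
  have hsplit : (∫ s in (0:ℝ)..α, γ s * Real.exp (∫ v in s..t, F v))
      + ∫ s in α..t, γ s * Real.exp (∫ v in s..t, F v)
      = ∫ s in (0:ℝ)..t, γ s * Real.exp (∫ v in s..t, F v) :=
    integral_add_adjacent_intervals i1 i2
  have hfirst : 0 ≤ ∫ s in (0:ℝ)..α, γ s * Real.exp (∫ v in s..t, F v) :=
    intervalIntegral.integral_nonneg hα0 (fun s _ => mul_nonneg (hγpos s) (Real.exp_pos _).le)
  have hlast : ∫ s in α..t, γ s * Real.exp (∫ v in s..t, F v)
      = ∫ u in Ioc α t, γ u * Real.exp (∫ v in u..t, F v) := integral_of_le hαlt.le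
  linarith [hYtle, h5, hsplit, hfirst, hlast]
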